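/- Define the integer sequence h(n) by h(0)=1, h(1)=1, h(2)=2, h(3)=3, h(4)=3, h(5)=4, and h(n)=h(n−2)+h(n−3) for n ≥ 6. Define the (1,3,3)-Padovan sequence p by p(0)=1, p(1)=3, p(2)=3, p(n)=p(n−2)+p(n−3) for n ≥ 3. Then for all n ≥ 3, h(n) = p(n−2). -/
import Mathlib


def h : ℕ → ℤ
  | 0 => 1
  | 1 => 1
  | 2 => 2
  | 3 => 3
  | 4 => 3
  | 5 => 4
  | (n + 6) => h (n + 4) + h (n + 3)

def p : ℕ → ℤ
  | 0 => 1
  | 1 => 3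
  | 2 => 3
  | (n + 3) => p (n + 1) + p n


lemma h_aux : ∀ n, h (n + 3) = p (n + 1) := by
  intro n
  induction n using Nat.strong_induction_on with
  | _ n ih =>
    match n with
    | 0 => rfl
    | 1 => rfl
    | 2 => rfl
    | (m + 3) =>
      show h (m + 6) = p (m + 4)
      rw [h, show m + 4 = (m + 1) + 3 from rfl, p]
      rw [show m + 4 = (m + 1) + 3 from rfl, ih (m+1) (by omega),
          show m + 3 = m + 3 from rfl, ih m (by omega)]

theorem h_eq_padovan (n : ℕ) (hn : 3 ≤ n) : h n = p (n - 2) := by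
  obtain ⟨m, rfl⟩ : ∃ m, n = m + 3 := ⟨n - 3, by omega⟩
  show h (m + 3) = p (m + 1)
  exact h_aux m
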